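/- Let T_l be any l×l matrix over GF(2), let T_L = T₂⊗T_l = [[T_l,0],[T_l,T_l]], let 0 ≤ i ≤ l−1, and let e = [e¹,e²] ∈ {0,1}^{2l} be an erasure pattern with halves e¹,e² ∈ {0,1}^l. Then e kills bit channel l+i of T_L if and only if the componentwise AND pattern e¹∧e² ∈ {0,1}^l (whose u-th coordinate is 1 exactly when e¹_u = 1 and e²_u = 1) kills bit channel i of T_l. -/

import Mathlib

open Matrix

/-- Kronecker product of square matrices over GF(2), with row/column index
pairs ordered lexicographically: `(a, b)` corresponds to index `a * n + b`. -/
noncomputable def kron {m n : ℕ} (A : Matrix (Fin m) (Fin m) (ZMod 2))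
    (B : Matrix (Fin n) (Fin n) (ZMod 2)) :
    Matrix (Fin (m * n)) (Fin (m * n)) (ZMod 2) :=
  Matrix.reindex finProdFinEquiv finProdFinEquiv (Matrix.kroneckerMap (· * ·) A B)

/-- The matrix `T₂ = [[1,0],[1,1]]` over GF(2). -/
def Ttwo : Matrix (Fin 2) (Fin 2) (ZMod 2) := !![1, 0; 1, 1]

/-- An erasure pattern `e : Fin l → Bool` (where `e j = true` means the `j`-th
copy of the channel is erased) kills bit channel `i` of the kernel `T` if the
vector `Y_{l-i} = (1,0,…,0)ᵀ` of length `l - i` (indexed by rows `r` with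
`i ≤ r`) is not in the `𝔽₂`-linear span of the columns of the submatrix
`T[i : l-1]` at the non-erased positions. -/
def Kills {l : ℕ} (T : Matrix (Fin l) (Fin l) (ZMod 2)) (i : Fin l)
    (e : Fin l → Bool) : Prop :=
  (fun r : {r : Fin l // i ≤ r} => if r.val = i then (1 : ZMod 2) else 0) ∉
    Submodule.span (ZMod 2)
      {w : {r : Fin l // i ≤ r} → ZMod 2 | ∃ j : Fin l, e j = false ∧ w = fun r => T r.val j}

lemma kron_apply_lower {l : ℕ} (T : Matrix (Fin l) (Fin l) (ZMod 2))
    (r j : Fin l) (hr : l + r.val < 2 * l) (hj : (j : ℕ) < 2 * l) :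
    kron Ttwo T ⟨l + r.val, hr⟩ ⟨(j : ℕ), hj⟩ = T r j := by
  have hl : 0 < l := r.pos
  simp only [kron, Matrix.reindex_apply, Matrix.submatrix_apply,
    finProdFinEquiv_symm_apply, Matrix.kroneckerMap_apply]
  have h1 : Fin.divNat (⟨l + r.val, hr⟩ : Fin (2 * l)) = (1 : Fin 2) := by
    apply Fin.ext
    simp [Fin.divNat]
    rw [Nat.add_comm, Nat.add_div_right _ hl, Nat.div_eq_of_lt r.isLt]
  have h2 : Fin.modNat (⟨l + r.val, hr⟩ : Fin (2 * l)) = r := by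
    apply Fin.ext
    simp [Fin.modNat]
    exact Nat.mod_eq_of_lt r.isLt
  have h3 : Fin.divNat (⟨(j : ℕ), hj⟩ : Fin (2 * l)) = (0 : Fin 2) := by
    apply Fin.ext
    simp [Fin.divNat, Nat.div_eq_of_lt j.isLt]
  have h4 : Fin.modNat (⟨(j : ℕ), hj⟩ : Fin (2 * l)) = j := by
    apply Fin.ext
    simp [Fin.modNat, Nat.mod_eq_of_lt j.isLt]
  rw [h1, h2, h3, h4]
  simp [Ttwo]

lemma kron_apply_lower' {l : ℕ} (T : Matrix (Fin l) (Fin l) (ZMod 2))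
    (r j : Fin l) (hr : l + r.val < 2 * l) (hj : l + (j : ℕ) < 2 * l) :
    kron Ttwo T ⟨l + r.val, hr⟩ ⟨l + (j : ℕ), hj⟩ = T r j := by
  have hl : 0 < l := r.pos
  simp only [kron, Matrix.reindex_apply, Matrix.submatrix_apply,
    finProdFinEquiv_symm_apply, Matrix.kroneckerMap_apply]
  have h1 : Fin.divNat (⟨l + r.val, hr⟩ : Fin (2 * l)) = (1 : Fin 2) := by
    apply Fin.ext
    simp [Fin.divNat]
    rw [Nat.add_comm, Nat.add_div_right _ hl, Nat.div_eq_of_lt r.isLt]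
  have h2 : Fin.modNat (⟨l + r.val, hr⟩ : Fin (2 * l)) = r := by
    apply Fin.ext
    simp [Fin.modNat]
    exact Nat.mod_eq_of_lt r.isLt
  have h3 : Fin.divNat (⟨l + (j : ℕ), hj⟩ : Fin (2 * l)) = (1 : Fin 2) := by
    apply Fin.ext
    simp [Fin.divNat]
    rw [Nat.add_comm, Nat.add_div_right _ hl, Nat.div_eq_of_lt j.isLt]
  have h4 : Fin.modNat (⟨l + (j : ℕ), hj⟩ : Fin (2 * l)) = j := by
    apply Fin.ext
    simp [Fin.modNat]
    exact Nat.mod_eq_of_lt j.isLt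
  rw [h1, h2, h3, h4]
  simp [Ttwo]

theorem kills_kron_lowerHalf_iff {l : ℕ} (T : Matrix (Fin l) (Fin l) (ZMod 2)) (i : Fin l)
    (e : Fin (2 * l) → Bool) :
    Kills (kron Ttwo T) ⟨l + (i : ℕ), by have := i.isLt; omega⟩ e ↔
      Kills T i (fun u =>
        e ⟨(u : ℕ), by have := u.isLt; omega⟩ && e ⟨l + (u : ℕ), by have := u.isLt; omega⟩) := by
  classical
  have hl : 0 < l := i.pos
  set i' : Fin (2 * l) := ⟨l + (i : ℕ), by have := i.isLt; omega⟩ with hi'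
  -- the reindexing equivalence between rows
  let φ : {r : Fin l // i ≤ r} ≃ {r' : Fin (2 * l) // i' ≤ r'} :=
  { toFun := fun r => ⟨⟨l + r.val.val, by have := r.val.isLt; omega⟩, by
      have := r.property
      simp only [Fin.le_def, hi'] at *
      omega⟩
    invFun := fun r' => ⟨⟨r'.val.val - l, by
        have h1 := r'.val.isLt
        omega⟩, by
      have := r'.property
      simp only [Fin.le_def, hi'] at *
      omega⟩
    left_inv := fun r => by
      apply Subtype.ext; apply Fin.ext; simp
    right_inv := fun r' => by
      have := r'.property
      simp only [Fin.le_def, hi'] at this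
      apply Subtype.ext; apply Fin.ext; simp; omega }
  let E := LinearEquiv.funCongrLeft (ZMod 2) (ZMod 2) φ
  set SL : Set ({r' : Fin (2 * l) // i' ≤ r'} → ZMod 2) :=
    {w | ∃ j : Fin (2 * l), e j = false ∧ w = fun r => (kron Ttwo T) r.val j} with hSL
  set Ss : Set ({r : Fin l // i ≤ r} → ZMod 2) :=
    {w | ∃ j : Fin l,
      (e ⟨(j : ℕ), by have := j.isLt; omega⟩ && e ⟨l + (j : ℕ), by have := j.isLt; omega⟩) = false
      ∧ w = fun r => T r.val j} with hSs
  have himg : E '' SL = Ss := by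
    ext w
    constructor
    · rintro ⟨v, ⟨j', hj', rfl⟩, rfl⟩
      by_cases hlt : (j' : ℕ) < l
      · refine ⟨⟨j', hlt⟩, ?_, ?_⟩
        · have : (⟨(j' : ℕ), by omega⟩ : Fin (2 * l)) = j' := Fin.ext rfl
          rw [this, hj']
          simp
        · funext r
          show kron Ttwo T (φ r).val j' = _
          exact kron_apply_lower T r.val ⟨(j' : ℕ), hlt⟩
            (by have := r.val.isLt; omega) j'.isLt
      · have hjl : (j' : ℕ) - l < l := by have := j'.isLt; omega
        refine ⟨⟨(j' : ℕ) - l, hjl⟩, ?_, ?_⟩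
        · have : (⟨l + ((j' : ℕ) - l), by omega⟩ : Fin (2 * l)) = j' := by
            apply Fin.ext; simp; omega
          rw [this, hj']
          simp
        · funext r
          show kron Ttwo T (φ r).val j' = _
          have key := kron_apply_lower' T r.val ⟨(j' : ℕ) - l, hjl⟩
            (by have := r.val.isLt; omega) (by simp; omega)
          have hj'' : j' = ⟨l + ((j' : ℕ) - l), by have := j'.isLt; omega⟩ := by
            apply Fin.ext; simp; omega
          conv_lhs => rw [hj'']
          exact key
    · rintro ⟨j, hj, rfl⟩
      rw [Bool.and_eq_false_iff] at hj
      rcases hj with hj | hj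
      · refine ⟨fun r' => kron Ttwo T r'.val ⟨(j : ℕ), by have := j.isLt; omega⟩,
          ⟨⟨(j : ℕ), by have := j.isLt; omega⟩, hj, rfl⟩, ?_⟩
        funext r
        show kron Ttwo T (φ r).val _ = _
        exact kron_apply_lower T ⟨r.val.val, r.val.isLt⟩ _ _ _
      · refine ⟨fun r' => kron Ttwo T r'.val ⟨l + (j : ℕ), by have := j.isLt; omega⟩,
          ⟨⟨l + (j : ℕ), by have := j.isLt; omega⟩, hj, rfl⟩, ?_⟩
        funext r
        show kron Ttwo T (φ r).val _ = _
        exact kron_apply_lower' T ⟨r.val.val, r.val.isLt⟩ _ _ _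
  have htarget : E (fun r' : {r' : Fin (2 * l) // i' ≤ r'} =>
      if r'.val = i' then (1 : ZMod 2) else 0)
      = (fun r : {r : Fin l // i ≤ r} => if r.val = i then (1 : ZMod 2) else 0) := by
    funext r
    show (if (φ r).val = i' then (1 : ZMod 2) else 0) = _
    congr 1
    simp only [eq_iff_iff]
    constructor
    · intro h
      have : ((φ r).val : ℕ) = (i' : ℕ) := by rw [h]
      simp only [hi'] at this
      apply Fin.ext
      have : l + (r.val : ℕ) = l + (i : ℕ) := this
      omega
    · intro h
      apply Fin.ext
      show l + (r.val : ℕ) = l + (i : ℕ)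
      rw [h]
  have hspan : ∀ x, x ∈ Submodule.span (ZMod 2) SL ↔ E x ∈ Submodule.span (ZMod 2) Ss := by
    intro x
    rw [← himg, ← LinearEquiv.coe_coe, ← Submodule.map_span]
    constructor
    · intro h; exact Submodule.mem_map_of_mem h
    · intro h
      rcases Submodule.mem_map.mp h with ⟨y, hy, hxy⟩
      have hyx : y = x := E.injective hxy
      rwa [← hyx]
  unfold Kills
  rw [hspan, htarget]
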